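/- arXiv:2009.08452 — 3 statements merged into one kernel-verified Lean document; each statement's English description precedes it below -/
import Mathlib

section
/- Monotonicity of the adjusted chi-squared statistic: let t > 1, and let a, s, â, ŝ, ν, N be nonnegative reals with s > 0, ŝ ≥ s, â ≤ a + ν·N, and suppose â - ν·N ≥ ŝ/t and a ≥ s/t (the observed count exceeds the expected count in both true and adjusted versions). Then (â - ν·N - ŝ/t)² · t²/(ŝ·(t-1)) ≤ (a - s/t)² · t²/(s·(t-1)). -/
theorem adjusted_chi_squared_monotone
    (t a s ahat shat ν N : ℝ)
    (ht : 1 < t) (ha : 0 ≤ a) (hs : 0 < s) (hahat : 0 ≤ ahat) (hν : 0 ≤ ν) (hN : 0 ≤ N)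
    (hshat : s ≤ shat) (hcms : ahat ≤ a + ν * N)
    (hadj : shat / t ≤ ahat - ν * N) (htrue : s / t ≤ a) :
    (ahat - ν * N - shat / t) ^ 2 * t ^ 2 / (shat * (t - 1))
      ≤ (a - s / t) ^ 2 * t ^ 2 / (s * (t - 1)) := by
  have ht0 : 0 < t := lt_trans one_pos ht
  have h1 : 0 ≤ ahat - ν * N - shat / t := by linarith
  have hst : s / t ≤ shat / t := by gcongr
  have h2 : ahat - ν * N - shat / t ≤ a - s / t := by linarith
  have hnum : (ahat - ν * N - shat / t) ^ 2 * t ^ 2 ≤ (a - s / t) ^ 2 * t ^ 2 := by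
    have := pow_le_pow_left₀ h1 h2 2
    nlinarith [sq_nonneg t]
  have hd1 : 0 < s * (t - 1) := by nlinarith
  have hd2 : s * (t - 1) ≤ shat * (t - 1) := by nlinarith
  exact div_le_div₀ (by positivity) hnum hd1 hd2
end

section
/- Count-min sketch row error bound in expectation: for a fixed item x and a fixed row i with a hash function h_i chosen uniformly at random from a pairwise-independent family into b buckets, E[C[i][h_i(x)]] ≤ c(x) + N/b, where N is the total number of arrivals and c(x) the true count of x. -/
open MeasureTheory

theorem cms_row_expected_error
    {Ω : Type*} [MeasurableSpace Ω] (P : Measure Ω) [IsProbabilityMeasure P]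
    (I : Type*) [DecidableEq I] (b : ℕ) (hb : 0 < b)
    (h : Ω → I → Fin b) (x : I) (items : List I)
    (hmeas : ∀ y, MeasurableSet {ω | h ω y = h ω x})
    (hpair : ∀ y, y ≠ x → (P {ω | h ω y = h ω x}).toReal ≤ 1 / (b : ℝ))
    (hint : Integrable (fun ω => ((items.filter (fun y => h ω y = h ω x)).length : ℝ)) P) :
    ∫ ω, ((items.filter (fun y => h ω y = h ω x)).length : ℝ) ∂P
      ≤ (items.count x : ℝ) + (items.length : ℝ) / (b : ℝ) := by
  have hb' : (0:ℝ) < b := by exact_mod_cast hb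
  have hind : ∀ y : I, Integrable (fun ω => if h ω y = h ω x then (1:ℝ) else 0) P := by
    intro y
    have : Integrable ({ω | h ω y = h ω x}.indicator (fun _ => (1:ℝ))) P :=
      (integrable_const (1:ℝ)).indicator (hmeas y)
    refine this.congr (Filter.Eventually.of_forall fun ω => ?_)
    simp [Set.indicator_apply, Set.mem_setOf_eq]
  have hindval : ∀ y : I,
      ∫ ω, (if h ω y = h ω x then (1:ℝ) else 0) ∂P = (P {ω | h ω y = h ω x}).toReal := by
    intro y
    rw [← measureReal_def, ← integral_indicator_one (hmeas y)]
    congr 1 with ω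
    simp [Set.indicator_apply, Set.mem_setOf_eq]
  induction items with
  | nil => simp
  | cons a l ih =>
    have hsplit : ∀ ω, (((a :: l).filter (fun y => h ω y = h ω x)).length : ℝ)
        = (if h ω a = h ω x then (1:ℝ) else 0)
          + ((l.filter (fun y => h ω y = h ω x)).length : ℝ) := by
      intro ω
      by_cases hc : h ω a = h ω x <;> simp [List.filter_cons, hc, add_comm]
    have hintl : Integrable (fun ω => ((l.filter (fun y => h ω y = h ω x)).length : ℝ)) P := by
      have := hint.sub (hind a)
      refine this.congr (Filter.Eventually.of_forall fun ω => ?_)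
      simp only [Pi.sub_apply]
      rw [hsplit ω]; ring
    have hval : ∫ ω, (((a :: l).filter (fun y => h ω y = h ω x)).length : ℝ) ∂P
        = (P {ω | h ω a = h ω x}).toReal
          + ∫ ω, ((l.filter (fun y => h ω y = h ω x)).length : ℝ) ∂P := by
      rw [← hindval a, ← integral_add (hind a) hintl]
      exact integral_congr_ae (Filter.Eventually.of_forall fun ω => hsplit ω)
    rw [hval]
    have ihl := ih hintl
    have hmono : (l.length : ℝ) / (b:ℝ) ≤ ((l.length : ℝ) + 1) / (b:ℝ) := by
      gcongr
      linarith
    by_cases hax : a = x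
    · subst hax
      have hP1 : (P {ω | h ω a = h ω a}).toReal ≤ 1 :=
        ENNReal.toReal_le_of_le_ofReal zero_le_one (by simpa using prob_le_one)
      have hP2 : (P {ω | True}).toReal ≤ 1 := by simp
      simp only [List.count_cons_self, List.length_cons]
      push_cast
      linarith
    · have hP1 := hpair a hax
      simp only [List.count_cons, List.length_cons, beq_iff_eq, if_neg hax]
      push_cast
      have heq : ((l.length : ℝ) + 1) / (b:ℝ) = (l.length:ℝ)/(b:ℝ) + 1/(b:ℝ) := by ring
      linarith
end

section
/- Count-min sketch probabilistic guarantee: with w = ⌈ln(2/ε)⌉ independent hash rows, each with error probability at most 1/e of exceeding c(x) + ν·N (via Markov's inequality with b = ⌈e/ν⌉ buckets), the estimate ĉ(x) = min_i C[i][h_i(x)] satisfies P(ĉ(x) > c(x) + ν·N) ≤ ε/2. -/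
open MeasureTheory ProbabilityTheory

theorem cms_probabilistic_guarantee
    {Ω : Type*} [MeasurableSpace Ω] (P : Measure Ω) [IsProbabilityMeasure P]
    (w : ℕ) (hw0 : 0 < w) (rows : Fin w → Ω → ℝ) (cx ν N ε : ℝ)
    (hε : ε ∈ Set.Ioo (0 : ℝ) 2) (hw : Real.log (2 / ε) ≤ (w : ℝ))
    (hmeas : ∀ i, MeasurableSet {ω | cx + ν * N < rows i ω})
    (hindep : iIndepSet (fun i : Fin w => {ω | cx + ν * N < rows i ω}) P)
    (hrow : ∀ i, P {ω | cx + ν * N < rows i ω} ≤ ENNReal.ofReal (1 / Real.exp 1)) :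
    P {ω | cx + ν * N <
        Finset.univ.inf' ⟨⟨0, hw0⟩, Finset.mem_univ _⟩ (fun i => rows i ω)}
      ≤ ENNReal.ofReal (ε / 2) := by
  have hε0 := hε.1
  have hset : {ω | cx + ν * N <
      Finset.univ.inf' ⟨⟨0, hw0⟩, Finset.mem_univ _⟩ (fun i => rows i ω)} =
      ⋂ i ∈ Finset.univ, {ω | cx + ν * N < rows i ω} := by
    ext ω
    simp [Finset.lt_inf'_iff]
    exact (Finset.lt_inf'_iff _).trans (by simp)
  rw [hset, hindep.meas_biInter Finset.univ]
  calc (∏ i : Fin w, P {ω | cx + ν * N < rows i ω})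
      ≤ ∏ _i : Fin w, ENNReal.ofReal (1 / Real.exp 1) :=
        Finset.prod_le_prod' fun i _ => hrow i
    _ = ENNReal.ofReal ((1 / Real.exp 1) ^ w) := by
        rw [Finset.prod_const, Finset.card_univ, Fintype.card_fin,
          ← ENNReal.ofReal_pow (by positivity)]
    _ ≤ ENNReal.ofReal (ε / 2) := by
        apply ENNReal.ofReal_le_ofReal
        have h1 : (1 / Real.exp 1) ^ w = Real.exp (-(w : ℝ)) := by
          rw [one_div, ← Real.exp_neg, ← Real.exp_nat_mul]
          ring_nf
        rw [h1, ← Real.exp_log (x := ε / 2) (by positivity)]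
        apply Real.exp_le_exp.2
        have : Real.log (ε / 2) = - Real.log (2 / ε) := by
          rw [← Real.log_inv]; congr 1; field_simp
        linarith [this]
end
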